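/- For every k ≥ 1, if a word s of even length over a k-letter alphabet satisfies property (*), then the word obtained from s by appending one arbitrary letter of the alphabet still satisfies property (*). Consequently, n(k) is odd for every k ≥ 1. -/

import Mathlib

/-- `friedmanBlock s i` is the block `s_i s_{i+1} … s_{2i}` of the word `s`
(1-based indices); it has length `i + 1` when `2*i ≤ s.length`. -/
def friedmanBlock {α : Type} (s : List α) (i : ℕ) : List α :=
  (s.drop (i - 1)).take (i + 1)

/-- Friedman's property (*): there are no indices `1 ≤ i < j ≤ n/2` such that
`s^(i)` is a (scattered) subword of `s^(j)`.  Note `j ≤ n/2 ↔ 2*j ≤ n`. -/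
def SatisfiesStar {α : Type} (s : List α) : Prop :=
  ∀ i j : ℕ, 1 ≤ i → i < j → 2 * j ≤ s.length →
    ¬ (friedmanBlock s i).Sublist (friedmanBlock s j)

/-- `friedmanN k` = n(k), the length of a longest word over a `k`-letter
alphabet satisfying (*). -/
noncomputable def friedmanN (k : ℕ) : ℕ :=
  sSup {n : ℕ | ∃ s : List (Fin k), s.length = n ∧ SatisfiesStar s}

/-- A block only depends on a sufficiently long prefix of the word. -/
lemma friedmanBlock_prefix {α : Type} {s t : List α} {j : ℕ} (hj : 1 ≤ j)
    (hp : s <+: t) (hlen : 2 * j ≤ s.length) :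
    friedmanBlock t j = friedmanBlock s j := by
  obtain ⟨r, rfl⟩ := hp
  unfold friedmanBlock
  rw [List.drop_append_of_le_length (by omega),
    List.take_append_of_le_length (by rw [List.length_drop]; omega)]

/-- Property (*) is closed under taking prefixes. -/
lemma satisfiesStar_prefix {α : Type} {s t : List α}
    (hs : SatisfiesStar s) (hp : t <+: s) : SatisfiesStar t := by
  intro i j hi hij hj
  have hi' : 2 * i ≤ t.length := by omega
  rw [← friedmanBlock_prefix hi hp hi', ← friedmanBlock_prefix (by omega) hp hj]
  exact hs i j hi hij (le_trans hj hp.length_le)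

/-- Appending a letter to an even-length word satisfying (*) preserves (*). -/
lemma satisfiesStar_append {α : Type} {s : List α} (hev : Even s.length)
    (hs : SatisfiesStar s) (a : α) : SatisfiesStar (s ++ [a]) := by
  intro i j hi hij hj
  rw [List.length_append, List.length_singleton] at hj
  have hj' : 2 * j ≤ s.length := by
    rcases hev with ⟨m, hm⟩; omega
  have hpre : s <+: s ++ [a] := ⟨[a], rfl⟩
  rw [friedmanBlock_prefix hi hpre (by omega), friedmanBlock_prefix (by omega) hpre hj']
  exact hs i j hi hij hj'

/-- Friedman's finiteness theorem: the set of lengths of words over a finite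
alphabet satisfying (*) is bounded. -/
lemma friedman_bdd (k : ℕ) :
    BddAbove {n : ℕ | ∃ s : List (Fin k), s.length = n ∧ SatisfiesStar s} := by
  by_contra hbdd
  -- `P t` : there are arbitrarily long star words extending `t`.
  set P : List (Fin k) → Prop :=
    fun t => ∀ m : ℕ, ∃ s : List (Fin k), SatisfiesStar s ∧ t <+: s ∧ m ≤ s.length with hPdef
  have hP0 : P [] := by
    intro m
    rcases not_bddAbove_iff.mp hbdd m with ⟨n, ⟨s, hsl, hstar⟩, hmn⟩
    exact ⟨s, hstar, List.nil_prefix, by omega⟩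
  -- any extendable word can be extended by one letter.
  have step : ∀ t : List (Fin k), P t → ∃ a : Fin k, P (t ++ [a]) := by
    intro t ht
    by_contra hno
    push_neg at hno
    simp only [hPdef] at hno
    push_neg at hno
    choose f hf using hno
    obtain ⟨s, hstar, hpre, hlen⟩ := ht ((Finset.univ.sup f) + t.length + 1)
    obtain ⟨r, rfl⟩ := hpre
    rw [List.length_append] at hlen
    rcases r with _ | ⟨a, r'⟩
    · simp only [List.length_nil] at hlen; omega
    · have hpre' : t ++ [a] <+: t ++ a :: r' := ⟨r', by simp⟩
      have := hf a _ hstar hpre'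
      have hsup : f a ≤ Finset.univ.sup f := Finset.le_sup (Finset.mem_univ a)
      rw [List.length_append] at this
      omega
  -- build an infinite word all of whose prefixes are star words.
  let F : ℕ → {t : List (Fin k) // P t} := fun n =>
    Nat.rec ⟨[], hP0⟩
      (fun _ p => ⟨p.1 ++ [Classical.choose (step p.1 p.2)],
        Classical.choose_spec (step p.1 p.2)⟩) n
  have hFlen : ∀ n, (F n).1.length = n := by
    intro n
    induction n with
    | zero => rfl
    | succ n ih => show ((F n).1 ++ _).length = n + 1; simp [ih]
  have hFmono : ∀ m n, m ≤ n → (F m).1 <+: (F n).1 := by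
    intro m n hmn
    induction n with
    | zero => rw [Nat.le_zero.mp hmn]
    | succ n ih =>
      rcases Nat.lt_or_ge m (n + 1) with h | h
      · exact (ih (by omega)).trans ⟨_, rfl⟩
      · rw [Nat.le_antisymm hmn h]
  have hFstar : ∀ n, SatisfiesStar (F n).1 := by
    intro n
    obtain ⟨s, hstar, hpre, -⟩ := (F n).2 0
    exact satisfiesStar_prefix hstar hpre
  -- the sequence of blocks is a bad sequence.
  set g : ℕ → List (Fin k) := fun n => friedmanBlock (F (2 * (n + 1))).1 (n + 1) with hgdef
  have hbad : ∀ m n, m < n → ¬ (g m).Sublist (g n) := by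
    intro m n hmn
    have h1 : friedmanBlock (F (2 * (n + 1))).1 (m + 1) = g m := by
      rw [hgdef]
      exact friedmanBlock_prefix (by omega)
        (hFmono (2 * (m + 1)) (2 * (n + 1)) (by omega)) (hFlen (2 * (m + 1))).ge
    have h2 := hFstar (2 * (n + 1)) (m + 1) (n + 1) (Nat.le_add_left 1 m)
      (Nat.succ_lt_succ hmn) (hFlen (2 * (n + 1))).ge
    rw [← h1, hgdef]
    exact h2
  -- Higman's lemma gives a good pair, contradiction.
  have hpwo : (Set.univ : Set (Fin k)).PartiallyWellOrderedOn (· = ·) := by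
    intro f
    obtain ⟨x, y, hxy, heq⟩ := Finite.exists_ne_map_eq_of_infinite f
    rcases hxy.lt_or_gt with h | h
    · exact ⟨x, y, h, congrArg Subtype.val heq⟩
    · exact ⟨y, x, h, congrArg Subtype.val heq.symm⟩
  have hH := hpwo.partiallyWellOrderedOn_sublistForall₂ (· = ·)
  obtain ⟨m, n, hmn, hsub⟩ := hH (fun n => ⟨g n, fun x _ => Set.mem_univ x⟩)
  obtain ⟨l, hl, hls⟩ := List.sublistForall₂_iff.mp hsub
  rw [List.forall₂_eq_eq_eq] at hl
  exact hbad m n hmn (by subst hl; exact hls)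

/-- Appending any letter to an even-length word satisfying (*) preserves (*);
consequently n(k) is odd for every `k ≥ 1`. -/
theorem friedman_n_odd :
    (∀ k : ℕ, 1 ≤ k → ∀ s : List (Fin k), Even s.length → SatisfiesStar s →
      ∀ a : Fin k, SatisfiesStar (s ++ [a])) ∧
    (∀ k : ℕ, 1 ≤ k → Odd (friedmanN k)) := by
  constructor
  · intro k _ s hev hs a
    exact satisfiesStar_append hev hs a
  · intro k hk
    set S := {n : ℕ | ∃ s : List (Fin k), s.length = n ∧ SatisfiesStar s} with hSdef
    have hne : S.Nonempty := ⟨0, [], rfl, fun i j hi hij hj => by simp at hj; omega⟩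
    have hmem : friedmanN k ∈ S := Nat.sSup_mem hne (friedman_bdd k)
    rw [Nat.not_even_iff_odd.symm]
    intro hev
    obtain ⟨s, hsl, hstar⟩ := hmem
    have : friedmanN k + 1 ∈ S := by
      refine ⟨s ++ [⟨0, hk⟩], by simp [hsl], ?_⟩
      exact satisfiesStar_append (hsl ▸ hev) hstar _
    have h2 : friedmanN k + 1 ≤ friedmanN k := le_csSup (friedman_bdd k) this
    omega
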